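/- arXiv:2010.14770 — 2 statements merged into one kernel-verified Lean document; each statement's English description precedes it below -/
import Mathlib

section
/- Let (K,<) be an ordered field and let v be a henselian valuation on K. Then the valuation ring O_v is convex in (K,<). -/
/-- In an ordered field, the valuation ring of a henselian valuation is convex. -/
theorem stmt_1 {K : Type*} [Field K] [LinearOrder K] [IsStrictOrderedRing K] (O : ValuationSubring K)
    [HenselianLocalRing O] :
    ∀ a b : K, 0 ≤ a → a ≤ b → b ∈ O → a ∈ O := by
  intro a b ha hab hb
  by_contra haO
  have ha0 : a ≠ 0 := by rintro rfl; exact haO (zero_mem O)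
  have hapos : 0 < a := lt_of_le_of_ne ha (Ne.symm ha0)
  have hai : a⁻¹ ∈ O := (O.mem_or_inv_mem a).resolve_left haO
  -- a⁻¹ lies in the maximal ideal of O
  have hmem : (⟨a⁻¹, hai⟩ : O) ∈ IsLocalRing.maximalIdeal O := by
    rw [ValuationSubring.valuation_lt_one_iff]
    have hgt : ¬ O.valuation a ≤ 1 := fun h => haO (O.mem_of_valuation_le_one a h)
    have : O.valuation a⁻¹ = (O.valuation a)⁻¹ := map_inv₀ _ a
    rw [show ((⟨a⁻¹, hai⟩ : O) : K) = a⁻¹ from rfl] at *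
    rw [this]
    have hne : O.valuation a ≠ 0 := fun h => by
      simp [(Valuation.zero_iff _).mp h] at ha0
    rw [inv_lt_one₀ (zero_lt_iff.mpr hne)]
    exact lt_of_not_ge hgt
  -- the element s = -(b * a⁻¹) lies in the maximal ideal
  set s : O := -(⟨b, hb⟩ * ⟨a⁻¹, hai⟩) with hs
  have hsmem : s ∈ IsLocalRing.maximalIdeal O :=
    neg_mem (Ideal.mul_mem_left _ _ hmem)
  -- apply Hensel's lemma to f = X² + X - C s with approximate root 0
  have key := HenselianLocalRing.is_henselian
    (R := O) (Polynomial.X ^ 2 + (Polynomial.X - Polynomial.C s))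
    (Polynomial.monic_X_pow_add (by
      apply lt_of_le_of_lt (Polynomial.degree_sub_le _ _)
      rw [max_lt_iff, Polynomial.degree_X]
      exact ⟨by norm_num, lt_of_le_of_lt Polynomial.degree_C_le (by norm_num)⟩))
    0 (by simpa using hsmem) (by simp)
  obtain ⟨x, hx, -⟩ := key
  have hx' : x ^ 2 + (x - s) = 0 := by simpa [Polynomial.IsRoot] using hx
  -- transfer to K
  have hK := congrArg (fun t : O => (t : K)) hx'
  push_cast [hs] at hK
  have hba : 1 ≤ b * a⁻¹ := by
    rw [← div_eq_mul_inv, le_div_iff₀ hapos, one_mul]; exact hab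
  nlinarith [sq_nonneg (2 * (x : K) + 1), sq_nonneg (x : K)]
end

section
/- If k is an archimedean ordered field and G an ordered abelian group, then on the Hahn field k((G)) the valuation v_min (minimum of support) coincides with the natural valuation: two nonzero Hahn series s, t are archimedean equivalent if and only if min supp s = min supp t. -/
/-- Over an archimedean ordered field `k`, on the ordered Hahn field `k((G))`
(ordered by sign of the leading coefficient), two nonzero Hahn series are archimedean
equivalent if and only if the minima of their supports coincide; i.e. `v_min` coincides
with the natural valuation. -/
theorem stmt_8 {k G : Type*} [Field k] [LinearOrder k] [IsStrictOrderedRing k] [Archimedean k]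
    [AddCommGroup G] [LinearOrder G] [IsOrderedAddMonoid G]
    (L : LinearOrder (HahnSeries G k))
    (hpos : ∀ s : HahnSeries G k, s ≠ 0 → (L.lt 0 s ↔ 0 < s.coeff s.order))
    (hadd : ∀ a b c : HahnSeries G k, L.lt a b → L.lt (a + c) (b + c)) :
    ∀ s t : HahnSeries G k, s ≠ 0 → t ≠ 0 →
      ((∃ n : ℕ, L.lt (L.max s (-s)) (n • L.max t (-t)) ∧
          L.lt (L.max t (-t)) (n • L.max s (-s))) ↔ s.order = t.order) := by
  -- translation invariance
  have hlt01 : ∀ a b : HahnSeries G k, L.lt a b ↔ L.lt 0 (b - a) := by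
    intro a b
    constructor
    · intro h
      have h2 := hadd a b (-a) h
      rw [add_neg_cancel, ← sub_eq_add_neg] at h2
      exact h2
    · intro h
      have h2 := hadd 0 (b - a) a h
      rw [zero_add, sub_add_cancel] at h2
      exact h2
  -- coefficients of nsmul
  have hsm : ∀ (n : ℕ) (b : HahnSeries G k) (g : G), (n • b).coeff g = n • b.coeff g := by
    intro n b g
    induction n with
    | zero => simp
    | succ m ih => rw [succ_nsmul, succ_nsmul, HahnSeries.coeff_add, ih]
  -- characterization of order
  have horder : ∀ (x : HahnSeries G k) (g : G), x.coeff g ≠ 0 →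
      (∀ h, h < g → x.coeff h = 0) → x.order = g := by
    intro x g hg hlo
    have hx : x ≠ 0 := fun h => hg (by simp [h])
    rcases lt_or_eq_of_le (HahnSeries.order_le_of_coeff_ne_zero hg) with h | h
    · exact absurd (hlo _ h) (HahnSeries.coeff_order_eq_zero.not.mpr hx)
    · exact h
  -- positivity from a positive lowest coefficient
  have hpos2 : ∀ (x : HahnSeries G k) (g : G), 0 < x.coeff g →
      (∀ h, h < g → x.coeff h = 0) → L.lt 0 x := by
    intro x g hg hlo
    have hx : x ≠ 0 := fun h => (ne_of_gt hg) (by simp [h])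
    rw [hpos x hx, horder x g (ne_of_gt hg) hlo]
    exact hg
  -- key positive comparison lemma
  have key : ∀ (a b : HahnSeries G k) (n : ℕ), a.order = b.order →
      a.coeff a.order < n • b.coeff b.order → L.lt a (n • b) := by
    intro a b n hord hc
    rw [hlt01]
    refine hpos2 (n • b - a) a.order ?_ ?_
    · rw [HahnSeries.coeff_sub, hsm, hord, sub_pos]
      rw [hord] at hc; exact hc
    · intro h hh
      rw [HahnSeries.coeff_sub, hsm,
        HahnSeries.coeff_eq_zero_of_lt_order hh,
        HahnSeries.coeff_eq_zero_of_lt_order (hord ▸ hh), smul_zero, sub_zero]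
  -- incomparability when orders differ
  have keyneg : ∀ (a b : HahnSeries G k) (n : ℕ), a ≠ 0 → 0 < a.coeff a.order →
      a.order < b.order → ¬ L.lt a (n • b) := by
    intro a b n ha hac hab h
    rw [hlt01] at h
    have hcg : (n • b - a).coeff a.order = -(a.coeff a.order) := by
      rw [HahnSeries.coeff_sub, hsm, HahnSeries.coeff_eq_zero_of_lt_order hab,
        smul_zero, zero_sub]
    have hx : (n • b - a) ≠ 0 := by
      intro h0
      rw [h0] at hcg
      simp only [HahnSeries.coeff_zero] at hcg
      exact (ne_of_gt hac) (by linarith)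
    have hlo : ∀ g, g < a.order → (n • b - a).coeff g = 0 := by
      intro g hg
      rw [HahnSeries.coeff_sub, hsm,
        HahnSeries.coeff_eq_zero_of_lt_order (hg.trans hab),
        HahnSeries.coeff_eq_zero_of_lt_order hg, smul_zero, sub_zero]
    rw [hpos _ hx, horder _ a.order (by rw [hcg]; exact ne_of_lt (by linarith)) hlo, hcg] at h
    linarith
  -- properties of the absolute value
  have habs : ∀ s : HahnSeries G k, s ≠ 0 →
      (L.max s (-s)) ≠ 0 ∧ (L.max s (-s)).order = s.order ∧
        0 < (L.max s (-s)).coeff (L.max s (-s)).order := by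
    intro s hs
    have hc : s.coeff s.order ≠ 0 := HahnSeries.coeff_order_eq_zero.not.mpr hs
    rcases hc.lt_or_gt with hneg | hposc
    · -- leading coefficient negative : |s| = -s
      have hlt' : L.lt s (-s) := by
        rw [hlt01]
        refine hpos2 (-s - s) s.order ?_ ?_
        · rw [HahnSeries.coeff_sub, HahnSeries.coeff_neg]; linarith
        · intro h hh
          rw [HahnSeries.coeff_sub, HahnSeries.coeff_neg,
            HahnSeries.coeff_eq_zero_of_lt_order hh, neg_zero, zero_sub, neg_zero]
      have hle : L.le s (-s) := ((L.lt_iff_le_not_ge _ _).mp hlt').1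
      have hmax : L.max s (-s) = -s := by rw [L.max_def, if_pos hle]
      have hns : (-s : HahnSeries G k) ≠ 0 := neg_ne_zero.mpr hs
      have hno : (-s : HahnSeries G k).order = s.order := by
        refine horder _ _ ?_ ?_
        · rw [HahnSeries.coeff_neg]; exact neg_ne_zero.mpr hc
        · intro h hh
          rw [HahnSeries.coeff_neg, HahnSeries.coeff_eq_zero_of_lt_order hh, neg_zero]
      refine ⟨by rw [hmax]; exact hns, by rw [hmax, hno], ?_⟩
      rw [hmax, hno, HahnSeries.coeff_neg]
      linarith
    · -- leading coefficient positive : |s| = s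
      have hlt' : L.lt (-s) s := by
        rw [hlt01]
        refine hpos2 (s - -s) s.order ?_ ?_
        · rw [HahnSeries.coeff_sub, HahnSeries.coeff_neg]; linarith
        · intro h hh
          rw [HahnSeries.coeff_sub, HahnSeries.coeff_neg,
            HahnSeries.coeff_eq_zero_of_lt_order hh, neg_zero, sub_zero]
      have hnle : ¬ L.le s (-s) := ((L.lt_iff_le_not_ge _ _).mp hlt').2
      have hmax : L.max s (-s) = s := by rw [L.max_def, if_neg hnle]
      exact ⟨by rw [hmax]; exact hs, by rw [hmax], by rw [hmax]; exact hposc⟩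
  intro s t hs ht
  obtain ⟨hA0, hAo, hAc⟩ := habs s hs
  obtain ⟨hB0, hBo, hBc⟩ := habs t ht
  constructor
  · rintro ⟨n, h1, h2⟩
    rcases lt_trichotomy s.order t.order with h | h | h
    · exact absurd h1 (keyneg _ _ n hA0 hAc (by rw [hAo, hBo]; exact h))
    · exact h
    · exact absurd h2 (keyneg _ _ n hB0 hBc (by rw [hAo, hBo]; exact h))
  · intro h
    obtain ⟨n1, hn1⟩ := Archimedean.arch ((L.max s (-s)).coeff (L.max s (-s)).order) hBc
    obtain ⟨n2, hn2⟩ := Archimedean.arch ((L.max t (-t)).coeff (L.max t (-t)).order) hAc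
    have hords : (L.max s (-s)).order = (L.max t (-t)).order := by rw [hAo, hBo, h]
    refine ⟨n1 + n2 + 1, key _ _ _ hords ?_, key _ _ _ hords.symm ?_⟩
    · calc (L.max s (-s)).coeff (L.max s (-s)).order
          ≤ n1 • (L.max t (-t)).coeff (L.max t (-t)).order := hn1
        _ < (n1 + n2 + 1) • (L.max t (-t)).coeff (L.max t (-t)).order :=
            nsmul_lt_nsmul_left hBc (by omega)
    · calc (L.max t (-t)).coeff (L.max t (-t)).order
          ≤ n2 • (L.max s (-s)).coeff (L.max s (-s)).order := hn2
        _ < (n1 + n2 + 1) • (L.max s (-s)).coeff (L.max s (-s)).order :=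
            nsmul_lt_nsmul_left hAc (by omega)
end
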